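/- arXiv:1702.01271 — 2 statements merged into one kernel-verified Lean document; each statement's English description precedes it below -/
import Mathlib

section
/- Let q₁ < q₂ < ⋯ < q_n be primes and α₁,…,α_n positive reals with ∑_{i=1}^n q_i^{α_i}(1 - 1/q_i) ≤ 2g+1. Then q₁^{α₁}⋯q_n^{α_n} ≤ ((2g+1)/n)^n / ∏_{i=1}^n (1 - 1/q_i). -/
open Real Finset

theorem stmt4 (g : ℕ) (hg : 1 ≤ g) (n : ℕ) (hn : 1 ≤ n)
    (q : Fin n → ℕ) (hq : ∀ i, (q i).Prime) (hmono : StrictMono q)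
    (α : Fin n → ℝ) (hα : ∀ i, 0 < α i)
    (hconstr : ∑ i, (q i : ℝ) ^ (α i) * (1 - 1 / (q i : ℝ)) ≤ 2 * g + 1) :
    ∏ i, (q i : ℝ) ^ (α i) ≤
      ((2 * g + 1) / n) ^ (n : ℝ) / ∏ i, (1 - 1 / (q i : ℝ)) := by
  have hnpos : (0:ℝ) < n := by positivity
  set z : Fin n → ℝ := fun i => (q i : ℝ) ^ (α i) * (1 - 1 / (q i : ℝ)) with hzdef
  have hqpos : ∀ i, (1:ℝ) < (q i : ℝ) := fun i => by
    exact_mod_cast (hq i).one_lt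
  have hfac : ∀ i, (0:ℝ) < 1 - 1 / (q i : ℝ) := fun i => by
    have := hqpos i
    have h0 : (0:ℝ) < (q i : ℝ) := lt_trans one_pos this
    have : 1 / (q i : ℝ) < 1 := by rw [div_lt_one h0]; exact hqpos i
    linarith
  have hz : ∀ i, 0 < z i := fun i => by
    have h0 : (0:ℝ) < (q i : ℝ) := lt_trans one_pos (hqpos i)
    exact mul_pos (Real.rpow_pos_of_pos h0 _) (hfac i)
  -- AM-GM
  have hgm : ∏ i, (z i) ^ ((n:ℝ)⁻¹) ≤ ∑ i, (n:ℝ)⁻¹ * z i := by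
    apply Real.geom_mean_le_arith_mean_weighted
    · intro i _; positivity
    · simp [Finset.sum_const, Finset.card_univ]
      field_simp
    · intro i _; exact (hz i).le
  have hsum : ∑ i, (n:ℝ)⁻¹ * z i ≤ (2 * g + 1) / n := by
    rw [← Finset.mul_sum]
    rw [div_eq_inv_mul]
    exact mul_le_mul_of_nonneg_left hconstr (by positivity)
  have hrhs_pos : (0:ℝ) < (2 * g + 1) / n := by positivity
  have hprod_le : ∏ i, z i ≤ ((2 * g + 1) / n) ^ (n : ℝ) := by
    have h1 : (∏ i, (z i) ^ ((n:ℝ)⁻¹)) ^ (n:ℝ) ≤ (((2 * g + 1) / n)) ^ (n:ℝ) := by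
      apply Real.rpow_le_rpow (Finset.prod_nonneg fun i _ => Real.rpow_nonneg (hz i).le _) (hgm.trans hsum) hnpos.le
    calc ∏ i, z i = (∏ i, (z i) ^ ((n:ℝ)⁻¹)) ^ (n:ℝ) := by
          rw [Real.finset_prod_rpow _ _ (fun i _ => (hz i).le),
            Real.rpow_natCast,
            Real.rpow_inv_natCast_pow (Finset.prod_nonneg fun i _ => (hz i).le)
              (by omega)]
      _ ≤ _ := h1
  have hprodfac : (0:ℝ) < ∏ i, (1 - 1 / (q i : ℝ)) :=
    Finset.prod_pos fun i _ => hfac i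
  have hsplit : ∏ i, z i = (∏ i, (q i : ℝ) ^ (α i)) * ∏ i, (1 - 1 / (q i : ℝ)) := by
    rw [← Finset.prod_mul_distrib]
  rw [le_div_iff₀ hprodfac, ← hsplit]
  exact hprod_le
end

section
/- Assume Bürgisser's criterion as a hypothesis. Then for every g ≥ 1, every positive integer m that occurs as the order of an element of Sp(2g,ℤ) satisfies m ≤ 3e^{3g}. In particular, the set S(g) of such orders is a bounded subset of ℝ. -/
open Matrix

/-- The standard symplectic form `J = [[0, I_g],[-I_g, 0]]`. -/
def sympJ (g : ℕ) : Matrix (Fin g ⊕ Fin g) (Fin g ⊕ Fin g) ℤ :=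
  Matrix.fromBlocks 0 1 (-1) 0

/-- The integral symplectic group `Sp(2g, ℤ)` as a set of `2g × 2g` integer matrices. -/
def Sp (g : ℕ) : Set (Matrix (Fin g ⊕ Fin g) (Fin g ⊕ Fin g) ℤ) :=
  {A | Aᵀ * sympJ g * A = sympJ g}

/-- `S(g)`: the set of positive integers occurring as the order of a nonidentity
element of `Sp(2g, ℤ)`. -/
def SOrd (g : ℕ) : Set ℕ :=
  {m | ∃ A : Matrix (Fin g ⊕ Fin g) (Fin g ⊕ Fin g) ℤ, A ∈ Sp g ∧ A ≠ 1 ∧ orderOf A = m}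

/-- Bürgisser's criterion: `m > 1` occurs as an element order in `Sp(2g, ℤ)` iff
`∑_{i=2}^k φ(p_i^{α_i}) ≤ 2g` when `m ≡ 2 (mod 4)` (the sum omitting the smallest
prime `p₁ = 2`), and `∑_{i=1}^k φ(p_i^{α_i}) ≤ 2g` otherwise. -/
def BurgisserCriterion (g : ℕ) : Prop :=
  ∀ m : ℕ, 1 < m →
    (m ∈ SOrd g ↔
      if m % 4 = 2 then
        ∑ p ∈ m.primeFactors.erase 2, Nat.totient (p ^ m.factorization p) ≤ 2 * g
      else
        ∑ p ∈ m.primeFactors, Nat.totient (p ^ m.factorization p) ≤ 2 * g)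


lemma aux1 (x : ℝ) (hx : 1 ≤ x) : 2 * x ≤ Real.exp x := by
  have h2 : Real.exp x = Real.exp 1 * Real.exp (x - 1) := by
    rw [← Real.exp_add]; ring_nf
  nlinarith [Real.add_one_le_exp (x - 1), Real.exp_one_gt_d9, Real.exp_pos (x - 1)]

lemma aux2 {p α : ℕ} (hp : p.Prime) (hα : 1 ≤ α) :
    ((p ^ α : ℕ) : ℝ) ≤ Real.exp ((p ^ α).totient : ℝ) := by
  have h1 : 1 ≤ (p ^ α).totient := Nat.totient_pos.2 (pow_pos hp.pos α)
  have h2 : p ^ α ≤ 2 * (p ^ α).totient := by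
    obtain ⟨n, rfl⟩ := Nat.exists_eq_add_of_le hα
    rw [add_comm, Nat.totient_prime_pow hp (Nat.succ_pos n)]
    have hp2 : 2 ≤ p := hp.two_le
    have h3 : p ^ (n + 1) = p ^ n * p := by ring
    rw [h3]
    have h4 : p ≤ 2 * (p - 1) := by omega
    calc p ^ n * p ≤ p ^ n * (2 * (p - 1)) := Nat.mul_le_mul_left _ h4
      _ = 2 * (p ^ n * (p - 1)) := by ring
  calc ((p ^ α : ℕ) : ℝ) ≤ 2 * ((p ^ α).totient : ℝ) := by exact_mod_cast h2
    _ ≤ Real.exp ((p ^ α).totient : ℝ) := aux1 _ (by exact_mod_cast h1)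

lemma aux3 (m : ℕ) (hm : m ≠ 0) :
    m = ∏ p ∈ m.primeFactors, p ^ m.factorization p := by
  conv_lhs => rw [← Nat.factorization_prod_pow_eq_self hm]
  rfl

lemma aux4 {s : Finset ℕ} {m : ℕ} (hs : ∀ p ∈ s, p.Prime ∧ 1 ≤ m.factorization p) :
    ((∏ p ∈ s, p ^ m.factorization p : ℕ) : ℝ) ≤
      Real.exp (∑ p ∈ s, ((p ^ m.factorization p).totient : ℕ)) := by
  push_cast
  rw [show Real.exp (∑ p ∈ s, ((p ^ m.factorization p).totient : ℝ)) = ∏ p ∈ s, Real.exp ((p ^ m.factorization p).totient : ℝ) from Real.exp_sum _ _]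
  refine Finset.prod_le_prod (fun p hp => by positivity) (fun p hp => ?_)
  have := hs p hp
  exact_mod_cast aux2 this.1 this.2

lemma aux5 {g m : ℕ} (hBur : BurgisserCriterion g) (hm1 : 1 < m) (hm : m ∈ SOrd g) :
    (m : ℝ) ≤ 3 * Real.exp (3 * g) := by
  have hm0 : m ≠ 0 := by omega
  have hexp : Real.exp (2 * g) ≤ Real.exp (3 * g) := by
    apply Real.exp_le_exp.2; nlinarith [Nat.cast_nonneg (α := ℝ) g]
  have hcrit := (hBur m hm1).1 hm
  by_cases h4 : m % 4 = 2
  · rw [if_pos h4] at hcrit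
    -- m.factorization 2 = 1
    have h2m : 2 ∣ m := by omega
    have h2mem : 2 ∈ m.primeFactors := Nat.mem_primeFactors.2 ⟨Nat.prime_two, h2m, hm0⟩
    have hf2 : m.factorization 2 = 1 := by
      have hle : 1 ≤ m.factorization 2 :=
        (Nat.Prime.pow_dvd_iff_le_factorization Nat.prime_two hm0).1 (by simpa using h2m)
      have hlt : ¬ (2 ≤ m.factorization 2) := by
        intro h
        have : 2 ^ 2 ∣ m := (Nat.Prime.pow_dvd_iff_le_factorization Nat.prime_two hm0).2 h
        omega
      omega
    have heq : m = 2 * ∏ p ∈ m.primeFactors.erase 2, p ^ m.factorization p := by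
      conv_lhs => rw [aux3 m hm0]
      rw [← Finset.mul_prod_erase _ _ h2mem, hf2, pow_one]
    have hb := aux4 (s := m.primeFactors.erase 2) (m := m) (fun p hp => by
      have hp' := Finset.mem_of_mem_erase hp
      exact ⟨Nat.prime_of_mem_primeFactors hp', Nat.Prime.factorization_pos_of_dvd
        (Nat.prime_of_mem_primeFactors hp') hm0 (Nat.dvd_of_mem_primeFactors hp')⟩)
    have hsum : ((∑ p ∈ m.primeFactors.erase 2,
        ((p ^ m.factorization p).totient) : ℕ) : ℝ) ≤ (2 * g : ℝ) := by
      exact_mod_cast hcrit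
    calc (m : ℝ) = 2 * ((∏ p ∈ m.primeFactors.erase 2, p ^ m.factorization p : ℕ) : ℝ) := by
          conv_lhs => rw [heq]
          push_cast
          ring
      _ ≤ 2 * Real.exp (∑ p ∈ m.primeFactors.erase 2, ((p ^ m.factorization p).totient : ℕ)) := by
          nlinarith [hb, Real.exp_pos ((∑ p ∈ m.primeFactors.erase 2,
            ((p ^ m.factorization p).totient : ℕ) : ℝ))]
      _ ≤ 2 * Real.exp (2 * g) := by
          have := Real.exp_le_exp.2 hsum
          push_cast at this ⊢
          nlinarith [this]
      _ ≤ 3 * Real.exp (3 * g) := by nlinarith [hexp, Real.exp_pos ((2 : ℝ) * g)]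
  · rw [if_neg h4] at hcrit
    have hb := aux4 (s := m.primeFactors) (m := m) (fun p hp =>
      ⟨Nat.prime_of_mem_primeFactors hp, Nat.Prime.factorization_pos_of_dvd
        (Nat.prime_of_mem_primeFactors hp) hm0 (Nat.dvd_of_mem_primeFactors hp)⟩)
    have hsum : ((∑ p ∈ m.primeFactors,
        ((p ^ m.factorization p).totient) : ℕ) : ℝ) ≤ (2 * g : ℝ) := by
      exact_mod_cast hcrit
    calc (m : ℝ) = ((∏ p ∈ m.primeFactors, p ^ m.factorization p : ℕ) : ℝ) := by
          rw [← aux3 m hm0]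
      _ ≤ Real.exp (∑ p ∈ m.primeFactors, ((p ^ m.factorization p).totient : ℕ)) := hb
      _ ≤ Real.exp (2 * g) := by
          apply Real.exp_le_exp.2; push_cast at hsum ⊢; linarith
      _ ≤ 3 * Real.exp (3 * g) := by nlinarith [hexp, Real.exp_pos ((2 : ℝ) * g)]

theorem stmt9 (g : ℕ) (hg : 1 ≤ g) (hBur : BurgisserCriterion g) :
    (∀ m ∈ SOrd g, (m : ℝ) ≤ 3 * Real.exp (3 * g)) ∧
    BddAbove ((fun m : ℕ => (m : ℝ)) '' SOrd g) := by
  have key : ∀ m ∈ SOrd g, (m : ℝ) ≤ 3 * Real.exp (3 * g) := by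
    intro m hm
    rcases le_or_gt m 1 with h | h
    · have : (m : ℝ) ≤ 1 := by exact_mod_cast h
      nlinarith [Real.one_le_exp (by positivity : (0:ℝ) ≤ 3 * g)]
    · exact aux5 hBur h hm
  exact ⟨key, ⟨3 * Real.exp (3 * g), by rintro _ ⟨m, hm, rfl⟩; exact key m hm⟩⟩
end
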